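/- (Hoeffding–Bernstein inequality for sampling without replacement.) Let u_1, …, u_r be random samples drawn without replacement from the real numbers {c_1, …, c_R}. Then for every t > 0: P(|Σ_{i=1}^r u_i − r·c̄| ≥ t) ≤ 2·exp(−t² / (2r·σ_R² + t·Δ_R)), where Δ_R = max_i c_i − min_i c_i, c̄ = (1/R)·Σ_{i=1}^R c_i, and σ_R² = (1/R)·Σ_{i=1}^R (c_i − c̄)². -/

import Mathlib

open Finset Real
open scoped Classical

noncomputable section

/-- Probability of the event `P` over a uniformly random permutation of `Fin n`. -/
def permProb (n : ℕ) (P : Equiv.Perm (Fin n) → Prop) : ℝ :=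
  ((Finset.univ.filter (fun σ : Equiv.Perm (Fin n) => P σ)).card : ℝ) / (Nat.factorial n : ℝ)

lemma two_pow_le_factorial (n : ℕ) : 2 ^ (n+1) ≤ (n+2).factorial := by
  induction n with
  | zero => simp [Nat.factorial]
  | succ n ih =>
    have : (n+3).factorial = (n+3) * (n+2).factorial := rfl
    rw [this, pow_succ]
    calc 2^(n+1) * 2 ≤ (n+2).factorial * 2 := by nlinarith
      _ ≤ (n+3) * (n+2).factorial := by nlinarith [Nat.factorial_pos (n+2)]

lemma exp_quad_bound_nonneg {x u : ℝ} (hx0 : 0 ≤ x) (hxu : x ≤ u) (hu : u < 2) :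
    Real.exp x ≤ 1 + x + x ^ 2 / (2 - u) := by
  have hu0 : 0 ≤ u := le_trans hx0 hxu
  have hexp : Real.exp x = ∑' n : ℕ, x ^ n / n.factorial := by
    rw [Real.exp_eq_exp_ℝ, NormedSpace.exp_eq_tsum_div]
  have hsum : Summable (fun n : ℕ => x ^ n / n.factorial) :=
    NormedSpace.expSeries_div_summable x
  have hsplit := Summable.sum_add_tsum_nat_add 2 hsum
  have hgeo : Summable (fun n : ℕ => x^2 * (u/2)^n / 2) := by
    apply Summable.div_const
    exact (summable_geometric_of_lt_one (by positivity) (by linarith)).mul_left _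
  have hterm : ∀ n : ℕ, x ^ (n+2) / (n+2).factorial ≤ x^2 * (u/2)^n / 2 := by
    intro n
    have h1 : x ^ (n+2) ≤ x^2 * u^n := by
      have : x ^ (n+2) = x^2 * x^n := by ring
      rw [this]
      exact mul_le_mul_of_nonneg_left (pow_le_pow_left₀ hx0 hxu n) (by positivity)
    have h2 : (2:ℝ)^(n+1) ≤ ((n+2).factorial : ℝ) := by
      exact_mod_cast two_pow_le_factorial n
    have hf : (0:ℝ) < ((n+2).factorial : ℝ) := by positivity
    rw [div_le_div_iff₀ hf (by norm_num)]
    calc x^(n+2) * 2 ≤ x^2 * u^n * 2 := by nlinarith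
      _ = x^2 * (u/2)^n * 2^(n+1) := by rw [div_pow]; field_simp; ring
      _ ≤ x^2 * (u/2)^n * ((n+2).factorial : ℝ) := by
          apply mul_le_mul_of_nonneg_left h2 (by positivity)
  have htail : ∑' n : ℕ, x ^ (n+2) / (n+2).factorial ≤ ∑' n : ℕ, x^2 * (u/2)^n / 2 := by
    apply Summable.tsum_le_tsum hterm _ hgeo
    exact (summable_nat_add_iff 2).mpr hsum
  have hgval : ∑' n : ℕ, x^2 * (u/2)^n / 2 = x^2 / (2 - u) := by
    rw [tsum_div_const, tsum_mul_left, tsum_geometric_of_lt_one (by positivity) (by linarith)]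
    field_simp
  have hs2 : ∑ i ∈ Finset.range 2, x ^ i / (i.factorial : ℝ) = 1 + x := by
    simp [Finset.sum_range_succ, Nat.factorial]
  nlinarith [hsplit, htail, hgval, hs2, hexp]

lemma exp_quad_bound_nonpos {x : ℝ} (hx : x ≤ 0) : Real.exp x ≤ 1 + x + x ^ 2 / 2 := by
  have hd : ∀ y : ℝ, HasDerivAt (fun y : ℝ => 1 + y + y^2/2 - Real.exp y)
      (1 + y - Real.exp y) y := by
    intro y
    have h1 : HasDerivAt (fun y : ℝ => 1 + y + y^2/2) (1 + y) y := by
      have := ((hasDerivAt_id y).const_add (1:ℝ)).add ((hasDerivAt_pow 2 y).div_const 2)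
      refine this.congr_deriv ?_
      simp
    exact h1.sub (Real.hasDerivAt_exp y)
  have h : AntitoneOn (fun y : ℝ => 1 + y + y^2/2 - Real.exp y) (Set.Iic 0) := by
    apply antitoneOn_of_deriv_nonpos (convex_Iic 0)
    · fun_prop
    · intro y _
      exact ((hd y).differentiableAt).differentiableWithinAt
    · intro y _
      rw [(hd y).deriv]
      have := Real.add_one_le_exp y
      linarith
  have h0 : (1:ℝ) + 0 + 0^2/2 - Real.exp 0 ≤ 1 + x + x^2/2 - Real.exp x :=
    h hx Set.self_mem_Iic hx
  rw [Real.exp_zero] at h0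
  norm_num at h0
  linarith

lemma exp_le_quad {x u : ℝ} (hxu : |x| ≤ u) (hu : u < 2) :
    Real.exp x ≤ 1 + x + x ^ 2 / (2 - u) := by
  have hu0 : 0 ≤ u := le_trans (abs_nonneg x) hxu
  rcases le_or_gt 0 x with hx | hx
  · exact exp_quad_bound_nonneg hx (le_trans (le_abs_self x) hxu) hu
  · have := exp_quad_bound_nonpos hx.le
    have h2 : x^2/2 ≤ x^2/(2-u) := by
      apply div_le_div_of_nonneg_left (by positivity) (by linarith) (by linarith)
    linarith

lemma prod_if_succ {R : ℕ} (a : Fin R → ℝ) (σ : Equiv.Perm (Fin R)) (k : ℕ) (hk : k < R) :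
    (∏ j : Fin R, if (j : ℕ) < k + 1 then a (σ j) else 1) =
      (∏ j : Fin R, if (j : ℕ) < k then a (σ j) else 1) * a (σ ⟨k, hk⟩) := by
  have h : ∀ j : Fin R, (if (j : ℕ) < k + 1 then a (σ j) else 1) =
      (if (j : ℕ) < k then a (σ j) else 1) * (if j = ⟨k, hk⟩ then a (σ j) else 1) := by
    intro j
    rcases lt_trichotomy (j : ℕ) k with h1 | h1 | h1
    · have hne : j ≠ ⟨k, hk⟩ := by
        intro he; rw [he] at h1; simp at h1
      simp [h1, Nat.lt_succ_of_lt h1, hne]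
    · have he : j = ⟨k, hk⟩ := Fin.ext h1
      simp [he, Nat.lt_irrefl]
    · have hne : j ≠ ⟨k, hk⟩ := by
        intro he; rw [he] at h1; simp at h1
      simp [Nat.lt_asymm h1, hne, show ¬ (j:ℕ) < k + 1 by omega]
  rw [Finset.prod_congr rfl (fun j _ => h j), Finset.prod_mul_distrib,
    Finset.prod_ite_eq' Finset.univ (⟨k, hk⟩ : Fin R) (fun j => a (σ j))]
  simp

lemma reindex_perm_sum {R : ℕ} (τ : Equiv.Perm (Fin R)) (g : Equiv.Perm (Fin R) → ℝ) :
    ∑ σ : Equiv.Perm (Fin R), g (σ * τ) = ∑ σ : Equiv.Perm (Fin R), g σ :=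
  Fintype.sum_equiv (Equiv.mulRight τ) _ _ (fun _ => rfl)

lemma sum_perm_step {R : ℕ} (a : Fin R → ℝ) (ha : ∀ i, 0 ≤ a i) (k : ℕ) (hk : k < R) :
    (∑ σ : Equiv.Perm (Fin R), ∏ j : Fin R, if (j : ℕ) < k + 1 then a (σ j) else 1) ≤
      ((∑ i, a i) / R) *
        ∑ σ : Equiv.Perm (Fin R), ∏ j : Fin R, if (j : ℕ) < k then a (σ j) else 1 := by
  set K : Fin R := ⟨k, hk⟩ with hK
  set F : Equiv.Perm (Fin R) → ℝ := fun σ => ∏ j : Fin R, if (j : ℕ) < k then a (σ j) else 1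
    with hF
  have hF0 : ∀ σ, 0 ≤ F σ := by
    intro σ; apply Finset.prod_nonneg; intro j _
    split <;> [exact ha _; norm_num]
  have hRpos : (0 : ℝ) < R := by exact_mod_cast (Nat.zero_le k).trans_lt hk
  -- key claim
  have key : ∀ m : Fin R,
      (∑ σ : Equiv.Perm (Fin R), F σ * a (σ K)) ≤ ∑ σ : Equiv.Perm (Fin R), F σ * a (σ m) := by
    intro m
    rcases eq_or_ne m K with rfl | hmK
    · exact le_refl _
    set τ : Equiv.Perm (Fin R) := Equiv.swap K m with hτ
    have hτK : τ K = m := Equiv.swap_apply_left K m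
    have hτm : τ m = K := Equiv.swap_apply_right K m
    rcases lt_or_ge (m : ℕ) k with hm | hm
    · -- m inside the window
      set G : Equiv.Perm (Fin R) → ℝ :=
        fun σ => ∏ j : Fin R, if ((j : ℕ) < k ∧ j ≠ m) then a (σ j) else 1 with hG
      have hG0 : ∀ σ, 0 ≤ G σ := by
        intro σ; apply Finset.prod_nonneg; intro j _
        split <;> [exact ha _; norm_num]
      have hFG : ∀ σ, F σ = G σ * a (σ m) := by
        intro σ
        have h : ∀ j : Fin R, (if (j : ℕ) < k then a (σ j) else 1) =
            (if ((j : ℕ) < k ∧ j ≠ m) then a (σ j) else 1) *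
              (if j = m then a (σ j) else 1) := by
          intro j
          rcases eq_or_ne j m with rfl | hne
          · simp [hm]
          · by_cases hj : (j : ℕ) < k <;> simp [hj, hne]
        rw [hF]
        simp only
        rw [Finset.prod_congr rfl (fun j _ => h j), Finset.prod_mul_distrib,
          Finset.prod_ite_eq' Finset.univ m (fun j => a (σ j))]
        simp
        exact Or.inl rfl
      have hGτ : ∀ σ, G (σ * τ) = G σ := by
        intro σ
        apply Finset.prod_congr rfl
        intro j _
        by_cases hj : (j : ℕ) < k ∧ j ≠ m
        · have hjK : j ≠ K := by
            intro he; rw [he] at hj; simp [hK] at hj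
          have : τ j = j := Equiv.swap_apply_of_ne_of_ne hjK hj.2
          simp only [hj, if_true, Equiv.Perm.mul_apply, this]
        · simp [hj]
      have hRh : (∑ σ : Equiv.Perm (Fin R), G σ * a (σ K) ^ 2) =
          ∑ σ : Equiv.Perm (Fin R), G σ * a (σ m) ^ 2 := by
        calc (∑ σ : Equiv.Perm (Fin R), G σ * a (σ K) ^ 2)
            = ∑ σ : Equiv.Perm (Fin R), G (σ * τ) * a ((σ * τ) m) ^ 2 := by
              apply Finset.sum_congr rfl
              intro σ _
              rw [hGτ σ]
              simp [Equiv.Perm.mul_apply, hτm]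
          _ = ∑ σ : Equiv.Perm (Fin R), G σ * a (σ m) ^ 2 :=
              reindex_perm_sum τ (fun σ => G σ * a (σ m) ^ 2)
      calc (∑ σ : Equiv.Perm (Fin R), F σ * a (σ K))
          = ∑ σ : Equiv.Perm (Fin R), G σ * a (σ m) * a (σ K) := by
            exact Finset.sum_congr rfl (fun σ _ => by rw [hFG σ])
        _ ≤ ∑ σ : Equiv.Perm (Fin R),
              (G σ * a (σ m) ^ 2 / 2 + G σ * a (σ K) ^ 2 / 2) := by
            apply Finset.sum_le_sum
            intro σ _
            nlinarith [hG0 σ, sq_nonneg (a (σ m) - a (σ K)), ha (σ m), ha (σ K)]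
        _ = (∑ σ : Equiv.Perm (Fin R), G σ * a (σ m) ^ 2) / 2 +
              (∑ σ : Equiv.Perm (Fin R), G σ * a (σ K) ^ 2) / 2 := by
            rw [Finset.sum_add_distrib, Finset.sum_div, Finset.sum_div]
        _ = ∑ σ : Equiv.Perm (Fin R), G σ * a (σ m) ^ 2 := by
            rw [hRh]; ring
        _ = ∑ σ : Equiv.Perm (Fin R), F σ * a (σ m) := by
            apply Finset.sum_congr rfl
            intro σ _
            rw [hFG σ]
            ring
    · -- m outside the window : equality by swapping
      have hFτ : ∀ σ, F (σ * τ) = F σ := by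
        intro σ
        apply Finset.prod_congr rfl
        intro j _
        by_cases hj : (j : ℕ) < k
        · have hjK : j ≠ K := by
            intro he; rw [he] at hj; simp [hK] at hj
          have hjm : j ≠ m := by
            intro he; rw [he] at hj; omega
          have : τ j = j := Equiv.swap_apply_of_ne_of_ne hjK hjm
          simp only [hj, if_true, Equiv.Perm.mul_apply, this]
        · simp [hj]
      apply le_of_eq
      calc (∑ σ : Equiv.Perm (Fin R), F σ * a (σ K))
          = ∑ σ : Equiv.Perm (Fin R), F (σ * τ) * a ((σ * τ) m) := by
            apply Finset.sum_congr rfl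
            intro σ _
            rw [hFτ σ]
            simp [Equiv.Perm.mul_apply, hτm]
        _ = ∑ σ : Equiv.Perm (Fin R), F σ * a (σ m) := reindex_perm_sum τ (fun σ => F σ * a (σ m))
  -- assemble
  have hmain : (R : ℝ) * (∑ σ : Equiv.Perm (Fin R), F σ * a (σ K)) ≤
      (∑ i, a i) * ∑ σ : Equiv.Perm (Fin R), F σ := by
    calc (R : ℝ) * (∑ σ : Equiv.Perm (Fin R), F σ * a (σ K))
        = ∑ m : Fin R, ∑ σ : Equiv.Perm (Fin R), F σ * a (σ K) := by
          rw [Finset.sum_const, Finset.card_univ, Fintype.card_fin, nsmul_eq_mul]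
      _ ≤ ∑ m : Fin R, ∑ σ : Equiv.Perm (Fin R), F σ * a (σ m) :=
          Finset.sum_le_sum (fun m _ => key m)
      _ = ∑ σ : Equiv.Perm (Fin R), F σ * ∑ m : Fin R, a (σ m) := by
          rw [Finset.sum_comm]
          exact Finset.sum_congr rfl (fun σ _ => by rw [← Finset.mul_sum])
      _ = ∑ σ : Equiv.Perm (Fin R), F σ * ∑ i, a i := by
          exact Finset.sum_congr rfl (fun σ _ => by rw [Equiv.sum_comp σ a])
      _ = (∑ i, a i) * ∑ σ : Equiv.Perm (Fin R), F σ := by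
          rw [← Finset.sum_mul, mul_comm]
  have hstep : (∑ σ : Equiv.Perm (Fin R), ∏ j : Fin R, if (j : ℕ) < k + 1 then a (σ j) else 1)
      = ∑ σ : Equiv.Perm (Fin R), F σ * a (σ K) :=
    Finset.sum_congr rfl (fun σ _ => prod_if_succ a σ k hk)
  rw [hstep, div_mul_eq_mul_div, le_div_iff₀ hRpos, mul_comm _ (R:ℝ)]
  exact hmain

lemma sum_perm_prod_le {R : ℕ} (a : Fin R → ℝ) (ha : ∀ i, 0 ≤ a i) :
    ∀ r : ℕ, r ≤ R →
      (∑ σ : Equiv.Perm (Fin R), ∏ j : Fin R, if (j : ℕ) < r then a (σ j) else 1) ≤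
        ((∑ i, a i) / R) ^ r * (Nat.factorial R : ℝ) := by
  intro r
  induction r with
  | zero =>
    intro _
    simp [Finset.card_univ, Fintype.card_perm]
  | succ n ih =>
    intro hle
    have hn : n < R := hle
    have hT : (0:ℝ) ≤ (∑ i, a i) / R := by
      apply div_nonneg (Finset.sum_nonneg (fun i _ => ha i)) (Nat.cast_nonneg R)
    calc (∑ σ : Equiv.Perm (Fin R), ∏ j : Fin R, if (j : ℕ) < n + 1 then a (σ j) else 1)
        ≤ ((∑ i, a i) / R) *
            ∑ σ : Equiv.Perm (Fin R), ∏ j : Fin R, if (j : ℕ) < n then a (σ j) else 1 :=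
          sum_perm_step a ha n hn
      _ ≤ ((∑ i, a i) / R) * (((∑ i, a i) / R) ^ n * (Nat.factorial R : ℝ)) :=
          mul_le_mul_of_nonneg_left (ih (Nat.le_of_succ_le hle)) hT
      _ = ((∑ i, a i) / R) ^ (n + 1) * (Nat.factorial R : ℝ) := by ring

lemma tail_bound {R r : ℕ} (hr : 1 ≤ r) (hrR : r ≤ R) (b : Fin R → ℝ) (Δ t : ℝ)
    (hbsum : ∑ i, b i = 0) (hvar : 0 < ∑ i, (b i) ^ 2) (hΔ : ∀ i, |b i| ≤ Δ)
    (ht : 0 < t) :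
    ((Finset.univ.filter (fun σ : Equiv.Perm (Fin R) =>
        t ≤ ∑ j : Fin R, if (j : ℕ) < r then b (σ j) else 0)).card : ℝ) /
        (Nat.factorial R : ℝ) ≤
      Real.exp (-(t ^ 2) / (2 * r * ((∑ i, (b i) ^ 2) / R) + t * Δ)) := by
  have hR : 0 < R := lt_of_lt_of_le hr hrR
  have hRpos : (0:ℝ) < R := by exact_mod_cast hR
  set V : ℝ := (∑ i, (b i) ^ 2) / R with hVdef
  have hV : 0 < V := div_pos hvar hRpos
  have hΔ0 : 0 ≤ Δ := le_trans (abs_nonneg _) (hΔ ⟨0, hR⟩)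
  set D : ℝ := 2 * r * V + t * Δ with hDdef
  have hrpos : (0:ℝ) < r := by exact_mod_cast hr
  have hD : 0 < D := by positivity
  set l : ℝ := 2 * t / D with hldef
  have hl : 0 < l := by positivity
  have h2u : 2 - l * Δ = 4 * r * V / D := by
    rw [hldef, hDdef]
    field_simp
    ring
  have hu2 : l * Δ < 2 := by
    have : (0:ℝ) < 4 * r * V / D := by positivity
    linarith
  set a : Fin R → ℝ := fun i => Real.exp (l * b i) with hadef
  have ha : ∀ i, 0 ≤ a i := fun i => (Real.exp_pos _).le
  set m : ℝ := (∑ i, a i) / R with hmdef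
  have hm0 : 0 ≤ m := div_nonneg (Finset.sum_nonneg (fun i _ => ha i)) (Nat.cast_nonneg R)
  -- single-sample MGF bound
  have hm : m ≤ Real.exp (l ^ 2 * V / (2 - l * Δ)) := by
    have hsumle : ∑ i, a i ≤ ∑ i, (1 + l * b i + (l * b i) ^ 2 / (2 - l * Δ)) := by
      apply Finset.sum_le_sum
      intro i _
      apply exp_le_quad _ hu2
      rw [abs_mul, abs_of_pos hl]
      exact mul_le_mul_of_nonneg_left (hΔ i) hl.le
    have hsum2 : ∑ i, (1 + l * b i + (l * b i) ^ 2 / (2 - l * Δ)) =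
        R + l ^ 2 * (∑ i, (b i) ^ 2) / (2 - l * Δ) := by
      rw [Finset.sum_add_distrib, Finset.sum_add_distrib, ← Finset.mul_sum, hbsum,
        mul_zero, add_zero, ← Finset.sum_div]
      congr 1
      · simp [Finset.card_univ]
      · congr 1
        rw [Finset.mul_sum]
        apply Finset.sum_congr rfl
        intro i _
        ring
    have h2upos : (0:ℝ) < 2 - l * Δ := by rw [h2u]; positivity
    have hne : (2:ℝ) - l * Δ ≠ 0 := ne_of_gt h2upos
    have hRV : V * R = ∑ i, (b i) ^ 2 := by
      rw [hVdef]; field_simp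
    have hmle : m ≤ 1 + l ^ 2 * V / (2 - l * Δ) := by
      rw [hmdef, div_le_iff₀ hRpos]
      calc ∑ i, a i ≤ R + l ^ 2 * (∑ i, (b i) ^ 2) / (2 - l * Δ) :=
            le_trans hsumle (le_of_eq hsum2)
        _ = (1 + l ^ 2 * V / (2 - l * Δ)) * R := by
            rw [← hRV]; field_simp
    exact le_trans hmle (by linarith [Real.add_one_le_exp (l ^ 2 * V / (2 - l * Δ))])
  -- Chernoff
  set S : Equiv.Perm (Fin R) → ℝ :=
    fun σ => ∑ j : Fin R, if (j : ℕ) < r then b (σ j) else 0 with hSdef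
  set E := Finset.univ.filter (fun σ : Equiv.Perm (Fin R) => t ≤ S σ) with hEdef
  have hexp_prod : ∀ σ : Equiv.Perm (Fin R),
      Real.exp (l * S σ) = ∏ j : Fin R, if (j : ℕ) < r then a (σ j) else 1 := by
    intro σ
    rw [hSdef]
    simp only
    rw [Finset.mul_sum, Real.exp_sum]
    apply Finset.prod_congr rfl
    intro j _
    rw [mul_ite, mul_zero, apply_ite Real.exp, Real.exp_zero]
  have hcard : (E.card : ℝ) ≤ Real.exp (-(l * t)) * (m ^ r * (Nat.factorial R : ℝ)) := by
    have h1 : (E.card : ℝ) ≤ ∑ σ ∈ E, Real.exp (l * (S σ - t)) := by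
      calc (E.card : ℝ) = ∑ _σ ∈ E, (1:ℝ) := by simp
        _ ≤ ∑ σ ∈ E, Real.exp (l * (S σ - t)) := by
            apply Finset.sum_le_sum
            intro σ hσ
            rw [hEdef, Finset.mem_filter] at hσ
            have : 0 ≤ l * (S σ - t) := mul_nonneg hl.le (by linarith [hσ.2])
            exact Real.one_le_exp this
    have h2 : ∑ σ ∈ E, Real.exp (l * (S σ - t)) ≤
        ∑ σ : Equiv.Perm (Fin R), Real.exp (l * (S σ - t)) :=
      Finset.sum_le_sum_of_subset_of_nonneg (Finset.filter_subset _ _)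
        (fun _ _ _ => (Real.exp_pos _).le)
    have h3 : ∑ σ : Equiv.Perm (Fin R), Real.exp (l * (S σ - t)) =
        Real.exp (-(l * t)) * ∑ σ : Equiv.Perm (Fin R), Real.exp (l * S σ) := by
      rw [Finset.mul_sum]
      apply Finset.sum_congr rfl
      intro σ _
      rw [← Real.exp_add]
      ring_nf
    have h4 : ∑ σ : Equiv.Perm (Fin R), Real.exp (l * S σ) ≤ m ^ r * (Nat.factorial R : ℝ) := by
      calc ∑ σ : Equiv.Perm (Fin R), Real.exp (l * S σ)
          = ∑ σ : Equiv.Perm (Fin R), ∏ j : Fin R, if (j : ℕ) < r then a (σ j) else 1 :=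
            Finset.sum_congr rfl (fun σ _ => hexp_prod σ)
        _ ≤ ((∑ i, a i) / R) ^ r * (Nat.factorial R : ℝ) := sum_perm_prod_le a ha r hrR
        _ = m ^ r * (Nat.factorial R : ℝ) := by rw [hmdef]
    calc (E.card : ℝ) ≤ ∑ σ ∈ E, Real.exp (l * (S σ - t)) := h1
      _ ≤ ∑ σ : Equiv.Perm (Fin R), Real.exp (l * (S σ - t)) := h2
      _ = Real.exp (-(l * t)) * ∑ σ : Equiv.Perm (Fin R), Real.exp (l * S σ) := h3
      _ ≤ Real.exp (-(l * t)) * (m ^ r * (Nat.factorial R : ℝ)) := by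
          apply mul_le_mul_of_nonneg_left h4 (Real.exp_pos _).le
  -- final computation
  have hfact : (0:ℝ) < (Nat.factorial R : ℝ) := by
    exact_mod_cast Nat.factorial_pos R
  have hmpow : m ^ r ≤ Real.exp (r * (l ^ 2 * V / (2 - l * Δ))) := by
    calc m ^ r ≤ (Real.exp (l ^ 2 * V / (2 - l * Δ))) ^ r := pow_le_pow_left₀ hm0 hm r
      _ = Real.exp (r * (l ^ 2 * V / (2 - l * Δ))) := by
          rw [← Real.exp_nat_mul]
  have hexpeq : -(l * t) + r * (l ^ 2 * V / (2 - l * Δ)) = -(t ^ 2) / D := by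
    rw [h2u, hldef]
    field_simp
    ring
  calc (E.card : ℝ) / (Nat.factorial R : ℝ)
      ≤ Real.exp (-(l * t)) * m ^ r := by
        rw [div_le_iff₀ hfact]
        calc (E.card : ℝ) ≤ Real.exp (-(l * t)) * (m ^ r * (Nat.factorial R : ℝ)) := hcard
          _ = Real.exp (-(l * t)) * m ^ r * (Nat.factorial R : ℝ) := by ring
    _ ≤ Real.exp (-(l * t)) * Real.exp (r * (l ^ 2 * V / (2 - l * Δ))) :=
        mul_le_mul_of_nonneg_left hmpow (Real.exp_pos _).le
    _ = Real.exp (-(l * t) + r * (l ^ 2 * V / (2 - l * Δ))) := (Real.exp_add _ _).symm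
    _ = Real.exp (-(t ^ 2) / D) := by rw [hexpeq]

lemma sum_ite_const {R r : ℕ} (hrR : r ≤ R) (x : ℝ) :
    (∑ j : Fin R, if (j : ℕ) < r then x else 0) = r * x := by
  rw [Fin.sum_univ_eq_sum_range (fun j => if j < r then x else 0) R,
    Finset.sum_ite, Finset.sum_const, Finset.sum_const_zero, add_zero]
  have h : Finset.filter (fun i => i < r) (Finset.range R) = Finset.range r := by
    ext i; simp; omega
  rw [h, Finset.card_range, nsmul_eq_mul]


/-- Hoeffding–Bernstein inequality for sampling without replacement:
if `u_1,…,u_r` are the first `r` values of a uniformly random permutation of `c_1,…,c_R`,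
then `P(|∑ u_i − r c̄| ≥ t) ≤ 2 exp(−t²/(2r σ_R² + t Δ_R))`. -/
theorem hoeffding_bernstein_sampling (R r : ℕ) (hr : 1 ≤ r) (hrR : r ≤ R)
    (c : Fin R → ℝ) (t : ℝ) (ht : 0 < t) :
    permProb R (fun σ =>
      t ≤ |(∑ j : Fin R, if (j : ℕ) < r then c (σ j) else 0) -
            (r : ℝ) * ((∑ i, c i) / (R : ℝ))|) ≤
    2 * Real.exp (-(t ^ 2) /
      (2 * (r : ℝ) * ((∑ i, (c i - (∑ i', c i') / (R : ℝ)) ^ 2) / (R : ℝ)) +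
        t * ((⨆ i, c i) - ⨅ i, c i))) := by
  have hR : 0 < R := lt_of_lt_of_le hr hrR
  have hRpos : (0:ℝ) < R := by exact_mod_cast hR
  haveI : Nonempty (Fin R) := ⟨⟨0, hR⟩⟩
  set μ : ℝ := (∑ i, c i) / (R : ℝ) with hμdef
  rw [permProb]
  by_cases hdeg : ∀ i, c i = μ
  · -- degenerate case: all values equal
    have hempty : (Finset.univ.filter (fun σ : Equiv.Perm (Fin R) =>
        t ≤ |(∑ j : Fin R, if (j : ℕ) < r then c (σ j) else 0) - (r : ℝ) * μ|)) = ∅ := by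
      apply Finset.filter_eq_empty_iff.mpr
      intro σ _
      have hS : (∑ j : Fin R, if (j : ℕ) < r then c (σ j) else 0) = r * μ := by
        rw [show (∑ j : Fin R, if (j : ℕ) < r then c (σ j) else 0) =
            ∑ j : Fin R, if (j : ℕ) < r then μ else 0 from
          Finset.sum_congr rfl (fun j _ => by rw [hdeg (σ j)])]
        exact sum_ite_const hrR μ
      rw [hS]
      simp
      linarith
    rw [hempty]
    simp
    positivity
  · -- nondegenerate case
    push_neg at hdeg
    obtain ⟨i0, hi0⟩ := hdeg
    have hvar : 0 < ∑ i, (c i - μ) ^ 2 := by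
      apply Finset.sum_pos' (fun i _ => sq_nonneg _)
      refine ⟨i0, Finset.mem_univ _, ?_⟩
      have hne : c i0 - μ ≠ 0 := sub_ne_zero.mpr hi0
      exact lt_of_le_of_ne (sq_nonneg _) (Ne.symm (pow_ne_zero 2 hne))
    set Δ : ℝ := (⨆ i, c i) - ⨅ i, c i with hΔdef
    have hbdd : BddAbove (Set.range c) := Set.Finite.bddAbove (Set.finite_range c)
    have hbddb : BddBelow (Set.range c) := Set.Finite.bddBelow (Set.finite_range c)
    have hle_sup : ∀ i, c i ≤ ⨆ i, c i := fun i => le_ciSup hbdd i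
    have hinf_le : ∀ i, (⨅ i, c i) ≤ c i := fun i => ciInf_le hbddb i
    have hμ_le : μ ≤ ⨆ i, c i := by
      rw [hμdef, div_le_iff₀ hRpos]
      calc ∑ i, c i ≤ ∑ _i : Fin R, ⨆ i, c i := Finset.sum_le_sum (fun i _ => hle_sup i)
        _ = (⨆ i, c i) * R := by simp [Finset.card_univ, mul_comm]
    have hle_μ : (⨅ i, c i) ≤ μ := by
      rw [hμdef, le_div_iff₀ hRpos]
      calc (⨅ i, c i) * R = ∑ _i : Fin R, ⨅ i, c i := by simp [Finset.card_univ, mul_comm]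
        _ ≤ ∑ i, c i := Finset.sum_le_sum (fun i _ => hinf_le i)
    have hΔb : ∀ i, |c i - μ| ≤ Δ := by
      intro i
      rw [abs_le]
      constructor
      · rw [hΔdef]; have := hle_sup i; have := hinf_le i; linarith
      · rw [hΔdef]; have := hle_sup i; have := hinf_le i; linarith
    have hbsum : ∑ i, (c i - μ) = 0 := by
      rw [Finset.sum_sub_distrib, Finset.sum_const, Finset.card_univ, Fintype.card_fin,
        nsmul_eq_mul, hμdef]
      field_simp
      ring
    -- the two tails
    have htail1 := tail_bound hr hrR (fun i => c i - μ) Δ t hbsum hvar hΔb ht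
    have hbsum2 : ∑ i, (μ - c i) = 0 := by
      rw [show ∑ i, (μ - c i) = -∑ i, (c i - μ) from by
        rw [← Finset.sum_neg_distrib]; exact Finset.sum_congr rfl (fun i _ => by ring)]
      rw [hbsum, neg_zero]
    have hvar2 : 0 < ∑ i, (μ - c i) ^ 2 := by
      rw [show ∑ i, (μ - c i) ^ 2 = ∑ i, (c i - μ) ^ 2 from
        Finset.sum_congr rfl (fun i _ => by ring)]
      exact hvar
    have hΔb2 : ∀ i, |μ - c i| ≤ Δ := fun i => by rw [abs_sub_comm]; exact hΔb i
    have htail2 := tail_bound hr hrR (fun i => μ - c i) Δ t hbsum2 hvar2 hΔb2 ht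
    rw [show ∑ i, (μ - c i) ^ 2 = ∑ i, (c i - μ) ^ 2 from
      Finset.sum_congr rfl (fun i _ => by ring)] at htail2
    -- event inclusion
    set P1 : Equiv.Perm (Fin R) → Prop := fun σ =>
      t ≤ ∑ j : Fin R, if (j : ℕ) < r then c (σ j) - μ else 0 with hP1
    set P2 : Equiv.Perm (Fin R) → Prop := fun σ =>
      t ≤ ∑ j : Fin R, if (j : ℕ) < r then μ - c (σ j) else 0 with hP2
    have hX : ∀ σ : Equiv.Perm (Fin R),
        (∑ j : Fin R, if (j : ℕ) < r then c (σ j) - μ else 0) =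
          (∑ j : Fin R, if (j : ℕ) < r then c (σ j) else 0) - (r : ℝ) * μ := by
      intro σ
      rw [← sum_ite_const hrR μ (R := R) (r := r), ← Finset.sum_sub_distrib]
      apply Finset.sum_congr rfl
      intro j _
      by_cases hj : (j : ℕ) < r <;> simp [hj]
    have hXneg : ∀ σ : Equiv.Perm (Fin R),
        (∑ j : Fin R, if (j : ℕ) < r then μ - c (σ j) else 0) =
          (r : ℝ) * μ - (∑ j : Fin R, if (j : ℕ) < r then c (σ j) else 0) := by
      intro σ
      rw [← sum_ite_const hrR μ (R := R) (r := r), ← Finset.sum_sub_distrib]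
      apply Finset.sum_congr rfl
      intro j _
      by_cases hj : (j : ℕ) < r <;> simp [hj]
    have hsub : (Finset.univ.filter (fun σ : Equiv.Perm (Fin R) =>
        t ≤ |(∑ j : Fin R, if (j : ℕ) < r then c (σ j) else 0) - (r : ℝ) * μ|)) ⊆
        (Finset.univ.filter P1) ∪ (Finset.univ.filter P2) := by
      intro σ hσ
      rw [Finset.mem_filter] at hσ
      rw [Finset.mem_union, Finset.mem_filter, Finset.mem_filter]
      rcases le_abs.mp hσ.2 with h | h
      · exact Or.inl ⟨Finset.mem_univ _, by rw [hP1]; simp only; rw [hX σ]; exact h⟩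
      · exact Or.inr ⟨Finset.mem_univ _, by rw [hP2]; simp only; rw [hXneg σ]; linarith⟩
    have hcard : ((Finset.univ.filter (fun σ : Equiv.Perm (Fin R) =>
        t ≤ |(∑ j : Fin R, if (j : ℕ) < r then c (σ j) else 0) - (r : ℝ) * μ|)).card : ℝ) ≤
        ((Finset.univ.filter P1).card : ℝ) + ((Finset.univ.filter P2).card : ℝ) := by
      have h1 := Finset.card_le_card hsub
      have h2 := Finset.card_union_le (Finset.univ.filter P1) (Finset.univ.filter P2)
      exact_mod_cast le_trans h1 h2
    have hfact : (0:ℝ) < (Nat.factorial R : ℝ) := by exact_mod_cast Nat.factorial_pos R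
    calc ((Finset.univ.filter (fun σ : Equiv.Perm (Fin R) =>
        t ≤ |(∑ j : Fin R, if (j : ℕ) < r then c (σ j) else 0) - (r : ℝ) * μ|)).card : ℝ) /
          (Nat.factorial R : ℝ)
        ≤ (((Finset.univ.filter P1).card : ℝ) + ((Finset.univ.filter P2).card : ℝ)) /
            (Nat.factorial R : ℝ) := by
          exact (div_le_div_iff_of_pos_right hfact).mpr hcard
      _ = ((Finset.univ.filter P1).card : ℝ) / (Nat.factorial R : ℝ) +
            ((Finset.univ.filter P2).card : ℝ) / (Nat.factorial R : ℝ) := by ring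
      _ ≤ Real.exp (-(t ^ 2) / (2 * r * ((∑ i, (c i - μ) ^ 2) / R) + t * Δ)) +
            Real.exp (-(t ^ 2) / (2 * r * ((∑ i, (c i - μ) ^ 2) / R) + t * Δ)) :=
          add_le_add htail1 htail2
      _ = 2 * Real.exp (-(t ^ 2) / (2 * r * ((∑ i, (c i - μ) ^ 2) / R) + t * Δ)) := by ring

end
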